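/- Let u, v, and z₁,…,z_c be unit vectors (up to common scale) in a real inner product space such that ⟨u,v⟩ = (1/4)m, ⟨u,zⱼ⟩ = ⟨v,zⱼ⟩ = −(1/2)m, ⟨zⱼ,z_l⟩ = (1/4)m for j ≠ l, and ‖u‖² = ‖v‖² = ‖zⱼ‖² = m with m > 0. Then by the Cauchy–Schwarz inequality applied to u+v and z₁+⋯+z_c, one obtains c(5 − c) ≥ 0, hence c ≤ 5. -/

import Mathlib

theorem stmt_8 {V : Type*} [NormedAddCommGroup V] [InnerProductSpace ℝ V]
    (c : ℕ) (hc : 0 < c) (m : ℝ) (hm : 0 < m)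
    (u v : V) (z : Fin c → V)
    (hu : ‖u‖ ^ 2 = m) (hv : ‖v‖ ^ 2 = m) (hz : ∀ j, ‖z j‖ ^ 2 = m)
    (huv : (inner ℝ u v : ℝ) = (1 / 4) * m)
    (huz : ∀ j, (inner ℝ u (z j) : ℝ) = -(1 / 2) * m)
    (hvz : ∀ j, (inner ℝ v (z j) : ℝ) = -(1 / 2) * m)
    (hzz : ∀ j l, j ≠ l → (inner ℝ (z j) (z l) : ℝ) = (1 / 4) * m) :
    (c : ℝ) * (5 - (c : ℝ)) ≥ 0 ∧ c ≤ 5 := by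
  set S := ∑ j, z j with hS
  have hA : (inner ℝ (u + v) S : ℝ) = -(c : ℝ) * m := by
    rw [hS, inner_sum]
    simp only [inner_add_left, huz, hvz]
    rw [Finset.sum_const]
    simp [Finset.card_univ]
    ring
  have hUV : ‖u + v‖ ^ 2 = (5 / 2) * m := by
    rw [norm_add_sq_real, hu, hv, huv]; ring
  have key : ∀ j l, (inner ℝ (z j) (z l) : ℝ) = m / 4 + if j = l then 3 * m / 4 else 0 := by
    intro j l
    by_cases h : j = l
    · subst h
      rw [real_inner_self_eq_norm_sq, hz j]
      simp; ring
    · rw [hzz j l h]; simp [h]; ring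
  have hSS : ‖S‖ ^ 2 = (c : ℝ) * ((c : ℝ) * m / 4 + 3 * m / 4) := by
    rw [← real_inner_self_eq_norm_sq, hS, sum_inner]
    simp only [inner_sum, key]
    rw [Finset.sum_congr rfl (fun j _ => Finset.sum_add_distrib)]
    simp [Finset.sum_ite_eq, Finset.card_univ, Finset.mul_sum]
    ring
  have hcs := abs_real_inner_le_norm (u + v) S
  have h3 : (inner ℝ (u + v) S : ℝ) ^ 2 ≤ (‖u + v‖ * ‖S‖) ^ 2 := by
    rw [← sq_abs]
    exact pow_le_pow_left₀ (abs_nonneg _) hcs 2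
  rw [mul_pow, hUV, hSS, hA] at h3
  have hc' : (1 : ℝ) ≤ (c : ℝ) := by exact_mod_cast hc
  have h1 : (c : ℝ) * (5 - (c : ℝ)) ≥ 0 := by nlinarith [mul_pos hm hm, sq_nonneg m]
  refine ⟨h1, ?_⟩
  have : (c : ℝ) ≤ 5 := by nlinarith
  exact_mod_cast this
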